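/- For a persistence module M : (ℝ, ≤) → Vect_k with all structure maps of finite rank, the function μ([a,b]×[c,d]) = r(b,c) − r(a,c) − r(b,d) + r(a,d), where r(x,y) = rank M(x ≤ y) for x ≤ y, is nonnegative whenever a ≤ b ≤ c ≤ d. -/

import Mathlib

open CategoryTheory

/-- Rank–nullity for a map restricted to a finite-dimensional submodule. -/
lemma persMeas.map_finrank_add_ker (k : Type) {C D : Type*} [Field k] [AddCommGroup C] [Module k C]
    [AddCommGroup D] [Module k D] (h : C →ₗ[k] D) (p : Submodule k C)
    [Module.Finite k p] :
    Module.finrank k (p.map h)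
      + Module.finrank k (LinearMap.ker h ⊓ p : Submodule k C) = Module.finrank k p := by
  have H := (h.domRestrict p).finrank_range_add_finrank_ker
  rw [LinearMap.range_domRestrict, LinearMap.ker_domRestrict] at H
  rw [← H]
  congr 1
  have : Submodule.comap p.subtype (LinearMap.ker h)
      = Submodule.comap p.subtype (LinearMap.ker h ⊓ p) := by
    ext x; simp [x.2]
  rw [this]
  exact ((Submodule.comapSubtypeEquivOfLe inf_le_right).finrank_eq).symm

/-- The submodule form of the Frobenius rank inequality. -/
lemma persMeas.frobenius_key (k : Type) {C D : Type*} [Field k] [AddCommGroup C] [Module k C]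
    [AddCommGroup D] [Module k D] (h : C →ₗ[k] D) (p q : Submodule k C) (hpq : p ≤ q)
    [Module.Finite k p] [Module.Finite k q] :
    Module.finrank k p + Module.finrank k (q.map h)
      ≤ Module.finrank k q + Module.finrank k (p.map h) := by
  have hq := persMeas.map_finrank_add_ker k h q
  have hp := persMeas.map_finrank_add_ker k h p
  have : Module.Finite k (LinearMap.ker h ⊓ q : Submodule k C) :=
    Submodule.finiteDimensional_of_le inf_le_right
  have hmono : Module.finrank k (LinearMap.ker h ⊓ p : Submodule k C)
      ≤ Module.finrank k (LinearMap.ker h ⊓ q : Submodule k C) :=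
    Submodule.finrank_mono (inf_le_inf_left _ hpq)
  omega

/-- The rank `r(x,y)` of the structure map `M(x ≤ y)` of a persistence module. -/
noncomputable def persRank (k : Type) [Field k] (M : ℝ ⥤ ModuleCat k)
    {x y : ℝ} (h : x ≤ y) : ℕ :=
  Module.finrank k (LinearMap.range (M.map (homOfLE h)).hom)

/-- The persistence measure of a rectangle `[a,b] × [c,d]` (with
`a ≤ b ≤ c ≤ d`), `μ = r(b,c) − r(a,c) − r(b,d) + r(a,d)`, is nonnegative for a
persistence module whose structure maps all have finite rank. -/
theorem persistence_measure_nonneg (k : Type) [Field k] (M : ℝ ⥤ ModuleCat k)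
    (hfin : ∀ (x y : ℝ) (h : x ≤ y),
      Module.Finite k (LinearMap.range (M.map (homOfLE h)).hom))
    (a b c d : ℝ) (hab : a ≤ b) (hbc : b ≤ c) (hcd : c ≤ d) :
    0 ≤ (persRank k M (hbc : b ≤ c) : ℤ)
        - persRank k M (hab.trans hbc : a ≤ c)
        - persRank k M (hbc.trans hcd : b ≤ d)
        + persRank k M ((hab.trans hbc).trans hcd : a ≤ d) := by
  set g := M.map (homOfLE hab) with hg
  set φ := M.map (homOfLE hbc) with hφ
  set ψ := M.map (homOfLE hcd) with hψ
  have hac : M.map (homOfLE (hab.trans hbc)) = g ≫ φ := by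
    rw [← M.map_comp]; rfl
  have hbd : M.map (homOfLE (hbc.trans hcd)) = φ ≫ ψ := by
    rw [← M.map_comp]; rfl
  have had : M.map (homOfLE ((hab.trans hbc).trans hcd)) = (g ≫ φ) ≫ ψ := by
    rw [← M.map_comp, ← M.map_comp]; rfl
  set p : Submodule k (M.obj c) := Submodule.map φ.hom (LinearMap.range g.hom) with hpdef
  set q : Submodule k (M.obj c) := LinearMap.range φ.hom with hqdef
  have hpq : p ≤ q := by
    rintro x ⟨y, _, rfl⟩; exact ⟨y, rfl⟩
  have hpr : LinearMap.range (M.map (homOfLE (hab.trans hbc))).hom = p := by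
    rw [hac]; exact LinearMap.range_comp g.hom φ.hom
  have hqfin : Module.Finite k q := hfin b c hbc
  have hpfin : Module.Finite k p := by rw [← hpr]; exact hfin a c (hab.trans hbc)
  have key := persMeas.frobenius_key k ψ.hom p q hpq
  have h1 : persRank k M (hab.trans hbc : a ≤ c) = Module.finrank k p := by
    rw [persRank, hpr]
  have h2 : persRank k M (hbc : b ≤ c) = Module.finrank k q := rfl
  have h3 : persRank k M (hbc.trans hcd : b ≤ d) = Module.finrank k (q.map ψ.hom) := by
    rw [persRank, hbd,
      show LinearMap.range (φ ≫ ψ).hom = Submodule.map ψ.hom q from LinearMap.range_comp φ.hom ψ.hom]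
  have h4 : persRank k M ((hab.trans hbc).trans hcd : a ≤ d)
      = Module.finrank k (p.map ψ.hom) := by
    rw [persRank, had,
      show LinearMap.range ((g ≫ φ) ≫ ψ).hom = Submodule.map ψ.hom (LinearMap.range (g ≫ φ).hom) from
        LinearMap.range_comp (g ≫ φ).hom ψ.hom, ← hac, hpr]
  rw [h1, h2, h3, h4]
  omega
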